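/- For every integer d ≥ 3 there exists n₀ such that for all n ≥ n₀ the following holds: there exists a choice of signs z_γ ∈ {−1,+1}, one for each γ ∈ 𝔽₂ⁿ with ‖γ‖₁ = d, such that the function f : 𝔽₂ⁿ → [-1,1] defined by f(x) = binom(n,d)^{-1} · Σ_{‖γ‖₁ = d} z_γ · (-1)^{⟨γ,x⟩} satisfies: for every affine subspace 𝒰 of 𝔽₂ⁿ of dimension at least 2d · n^{1/(d−1)}, the restriction f_𝒰 has a nonzero Fourier coefficient of magnitude at least binom(n,d)^{-1}. In particular, for every δ < binom(n,d)^{-1}, f_𝒰 is not δ-regular on any affine subspace of dimension at least 2d · n^{1/(d−1)}. -/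

import Mathlib

open Finset

abbrev F2 (n : ℕ) := Fin n → ZMod 2

/-- The 𝔽₂ bilinear form ⟨γ,x⟩ = Σᵢ γᵢ xᵢ. -/
def ip {n : ℕ} (γ x : F2 n) : ZMod 2 := ∑ i, γ i * x i

/-- The character χ_γ(x) = (-1)^⟨γ,x⟩. -/
noncomputable def chi {n : ℕ} (γ x : F2 n) : ℝ := (-1 : ℝ) ^ (ip γ x).val

/-- Fourier coefficient f̂(γ) = 2^{-n} Σ_x f(x) (-1)^⟨γ,x⟩. -/
noncomputable def fCoeff {n : ℕ} (f : F2 n → ℝ) (γ : F2 n) : ℝ :=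
  (∑ x : F2 n, f x * chi γ x) / 2 ^ n

/-- f has Fourier degree at most d. -/
def HasFourierDegLE {n : ℕ} (f : F2 n → ℝ) (d : ℕ) : Prop :=
  ∀ γ : F2 n, d < hammingNorm γ → fCoeff f γ = 0

/-- Orthogonal subspace 𝒱^⊥. -/
def perp {n : ℕ} (V : Submodule (ZMod 2) (F2 n)) : Submodule (ZMod 2) (F2 n) where
  carrier := {γ | ∀ v ∈ V, ip γ v = 0}
  zero_mem' := by
    intro v _
    simp [ip]
  add_mem' := by
    intro a b ha hb v hv
    have h : ip (a + b) v = ip a v + ip b v := by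
      simp [ip, add_mul, Finset.sum_add_distrib]
    simp only [Set.mem_setOf_eq] at ha hb ⊢
    rw [h, ha v hv, hb v hv, add_zero]
  smul_mem' := by
    intro c a ha v hv
    have h : ip (c • a) v = c * ip a v := by
      simp [ip, Finset.mul_sum, mul_assoc]
    simp only [Set.mem_setOf_eq] at ha ⊢
    rw [h, ha v hv, mul_zero]

/-- Fourier coefficient of the restriction of f to the affine subspace α + 𝒱,
indexed by γ (from a complement 𝒲 of 𝒱^⊥):
f̂_𝒰(γ) = |𝒱|⁻¹ Σ_{x ∈ 𝒱} f(x+α)(-1)^⟨γ,x⟩. -/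
noncomputable def restrictCoeff {n : ℕ} (f : F2 n → ℝ) (V : Submodule (ZMod 2) (F2 n))
    (α γ : F2 n) : ℝ :=
  (∑ x : F2 n, Set.indicator (V : Set (F2 n)) (fun x => f (x + α) * chi γ x) x) / (Nat.card V)

/-- The restriction of f to α + 𝒱 is δ-regular. -/
def IsDeltaRegular {n : ℕ} (f : F2 n → ℝ) (V : Submodule (ZMod 2) (F2 n)) (α : F2 n)
    (δ : ℝ) : Prop :=
  ∀ W : Submodule (ZMod 2) (F2 n), IsCompl W (perp V) →
    ∀ γ ∈ W, γ ≠ 0 → |restrictCoeff f V α γ| ≤ δ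

/-- span of the standard basis vectors indexed by J. -/
def spanJ {n : ℕ} (J : Finset (Fin n)) : Submodule (ZMod 2) (F2 n) where
  carrier := {x | ∀ i ∉ J, x i = 0}
  zero_mem' := by intro i _; rfl
  add_mem' := by
    intro a b ha hb i hi
    simp only [Set.mem_setOf_eq] at ha hb ⊢
    simp [Pi.add_apply, ha i hi, hb i hi]
  smul_mem' := by
    intro c a ha i hi
    simp only [Set.mem_setOf_eq] at ha ⊢
    simp [Pi.smul_apply, ha i hi]

section basics
variable {n : ℕ}

lemma ip_comm (γ x : F2 n) : ip γ x = ip x γ := by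
  unfold ip; exact Finset.sum_congr rfl fun i _ => mul_comm _ _

lemma ip_add_right (γ x y : F2 n) : ip γ (x + y) = ip γ x + ip γ y := by
  unfold ip; rw [← Finset.sum_add_distrib]; exact Finset.sum_congr rfl fun i _ => by
    simp [mul_add]

lemma ip_add_left (γ γ' x : F2 n) : ip (γ + γ') x = ip γ x + ip γ' x := by
  rw [ip_comm, ip_add_right, ip_comm x γ, ip_comm x γ']

lemma neg_one_pow_val_add (a b : ZMod 2) :
    (-1 : ℝ) ^ (a + b).val = (-1 : ℝ) ^ a.val * (-1 : ℝ) ^ b.val := by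
  fin_cases a <;> fin_cases b <;> simp [ZMod.val] <;> first | rfl | exact pow_one _

lemma chi_add_right (γ x y : F2 n) : chi γ (x + y) = chi γ x * chi γ y := by
  unfold chi; rw [ip_add_right, neg_one_pow_val_add]

lemma chi_add_left (γ γ' x : F2 n) : chi (γ + γ') x = chi γ x * chi γ' x := by
  unfold chi; rw [ip_add_left, neg_one_pow_val_add]

lemma chi_eq_one_or (γ x : F2 n) : chi γ x = 1 ∨ chi γ x = -1 := by
  unfold chi; rcases Nat.even_or_odd (ip γ x).val with h | h
  · left; exact h.neg_one_pow
  · right; exact h.neg_one_pow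

lemma chi_ne_zero (γ x : F2 n) : chi γ x ≠ 0 := by
  rcases chi_eq_one_or γ x with h | h <;> rw [h] <;> norm_num

lemma chi_eq_one_of_ip_zero {γ x : F2 n} (h : ip γ x = 0) : chi γ x = 1 := by
  unfold chi; rw [h]; norm_num

lemma chi_eq_neg_one_of_ip_ne_zero {γ x : F2 n} (h : ip γ x ≠ 0) : chi γ x = -1 := by
  have h1 : ip γ x = 1 := by revert h; generalize ip γ x = a; revert a; decide
  unfold chi; rw [h1]; norm_num [ZMod.val]
  exact pow_one _

end basics

attribute [local instance low] Classical.propDecidable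

section charsum
variable {n : ℕ}

lemma mem_perp_iff {V : Submodule (ZMod 2) (F2 n)} {γ : F2 n} :
    γ ∈ perp V ↔ ∀ v ∈ V, ip γ v = 0 := Iff.rfl

lemma chi_comm (γ x : F2 n) : chi γ x = chi x γ := by unfold chi; rw [ip_comm]

/-- Character sum over a subspace. -/
lemma charsum (V : Submodule (ZMod 2) (F2 n)) (μ : F2 n) :
    ∑ x ∈ Finset.univ.filter (· ∈ V), chi μ x
      = if μ ∈ perp V then ((Nat.card V : ℝ)) else 0 := by
  by_cases h : μ ∈ perp V
  · rw [if_pos h]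
    rw [Finset.sum_congr rfl (fun x hx => chi_eq_one_of_ip_zero
      ((mem_perp_iff.1 h) x (Finset.mem_filter.1 hx).2))]
    simp only [Finset.sum_const, nsmul_eq_mul, mul_one]
    rw [Nat.card_eq_fintype_card, Fintype.card_subtype]
  · rw [if_neg h]
    simp only [mem_perp_iff, not_forall] at h
    obtain ⟨v₀, hv₀V, hv₀⟩ := h
    have key : ∑ x ∈ Finset.univ.filter (· ∈ V), chi μ x
        = ∑ x ∈ Finset.univ.filter (· ∈ V), chi μ (x + v₀) := by
      have hcanc : ∀ a : F2 n, a + v₀ + v₀ = a := by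
        intro a; funext i; simp [CharTwo.add_self_eq_zero, add_assoc]
      apply Finset.sum_nbij' (fun x => x + v₀) (fun x => x + v₀)
      · intro a ha
        simp only [Finset.mem_filter, Finset.mem_univ, true_and] at ha ⊢
        exact V.add_mem ha hv₀V
      · intro a ha
        simp only [Finset.mem_filter, Finset.mem_univ, true_and] at ha ⊢
        exact V.add_mem ha hv₀V
      · intro a _; exact hcanc a
      · intro a _; exact hcanc a
      · intro a _; rw [hcanc a]
    have flip : ∀ x, chi μ (x + v₀) = - chi μ x := by
      intro x
      rw [chi_add_right, chi_eq_neg_one_of_ip_ne_zero hv₀]; ring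
    rw [Finset.sum_congr rfl (fun x _ => flip x), Finset.sum_neg_distrib] at key
    linarith

end charsum

lemma restrictCoeff_formula {n : ℕ} (c : ℝ) (z : F2 n → ℝ) (d : ℕ)
    (V : Submodule (ZMod 2) (F2 n)) (α γ : F2 n) :
    restrictCoeff (fun x => c * ∑ γ' ∈ Finset.univ.filter (fun γ' : F2 n => hammingNorm γ' = d),
        z γ' * chi γ' x) V α γ
    = c * ∑ β ∈ Finset.univ.filter
        (fun β : F2 n => hammingNorm β = d ∧ β + γ ∈ perp V), z β * chi β α := by
  have hcard : ((Nat.card V : ℝ)) ≠ 0 := by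
    have : 0 < Nat.card V := Nat.card_pos
    positivity
  set D := Finset.univ.filter (fun γ' : F2 n => hammingNorm γ' = d) with hD
  set T := Finset.univ.filter (fun x : F2 n => x ∈ V) with hT
  unfold restrictCoeff
  have hstep : ∀ g : F2 n → ℝ,
      (∑ x : F2 n, Set.indicator (V : Set (F2 n)) g x) = ∑ x ∈ T, g x := by
    intro g
    rw [hT, Finset.sum_filter]
    refine Finset.sum_congr rfl fun x _ => ?_
    by_cases hx : x ∈ V
    · rw [Set.indicator_of_mem (by exact hx), if_pos hx]
    · rw [Set.indicator_of_notMem (by exact hx), if_neg hx]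
  rw [hstep]
  have hpt : ∀ x ∈ T, (c * ∑ β ∈ D, z β * chi β (x + α)) * chi γ x
      = c * ∑ β ∈ D, (z β * chi β α) * chi (β + γ) x := by
    intro x _
    rw [mul_assoc, Finset.sum_mul]
    congr 1
    refine Finset.sum_congr rfl fun β _ => ?_
    rw [chi_add_right, chi_add_left]; ring
  rw [Finset.sum_congr rfl hpt, ← Finset.mul_sum, Finset.sum_comm]
  have hinner : ∀ β ∈ D, (∑ x ∈ T, (z β * chi β α) * chi (β + γ) x)
      = if β + γ ∈ perp V then (z β * chi β α) * (Nat.card V : ℝ) else 0 := by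
    intro β _
    rw [← Finset.mul_sum, charsum V (β + γ)]
    by_cases h : β + γ ∈ perp V
    · rw [if_pos h, if_pos h]
    · rw [if_neg h, if_neg h, mul_zero]
  rw [Finset.sum_congr rfl hinner, Finset.sum_ite, Finset.sum_const_zero, add_zero]
  have hff : D.filter (fun β => β + γ ∈ perp V)
      = Finset.univ.filter (fun β : F2 n => hammingNorm β = d ∧ β + γ ∈ perp V) := by
    rw [hD, Finset.filter_filter]
  rw [hff, ← Finset.sum_mul]
  field_simp

section counting
variable {n k₀ m₀ d : ℕ}

lemma ip_smul_right {n : ℕ} (γ : F2 n) (c : ZMod 2) (x : F2 n) :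
    ip γ (c • x) = c * ip γ x := by
  simp [ip, Finset.mul_sum]; exact Finset.sum_congr rfl fun i _ => by ring

lemma ip_zero_right {n : ℕ} (γ : F2 n) : ip γ 0 = 0 := by simp [ip]

/-- the subspace cut out by the k₀ linear conditions given by A. -/
def pA {n k₀ : ℕ} (A : Fin k₀ → F2 n) : Submodule (ZMod 2) (F2 n) :=
  perp (Submodule.span (ZMod 2) (Set.range A))

lemma mem_pA {A : Fin k₀ → F2 n} {x : F2 n} :
    x ∈ pA A ↔ ∀ j, ip x (A j) = 0 := by
  constructor
  · intro h j
    exact h (A j) (Submodule.subset_span ⟨j, rfl⟩)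
  · intro h v hv
    induction hv using Submodule.span_induction with
    | mem v hv => obtain ⟨j, rfl⟩ := hv; exact h j
    | zero => exact ip_zero_right x
    | add a b _ _ ha hb => rw [ip_add_right, ha, hb, add_zero]
    | smul c a _ ha => rw [ip_smul_right, ha, mul_zero]

lemma perp_le_pA {V : Submodule (ZMod 2) (F2 n)} {A : Fin k₀ → F2 n}
    (hA : ∀ j, A j ∈ V) : perp V ≤ pA A := by
  intro x hx
  rw [mem_pA]
  intro j
  exact hx (A j) (hA j)

/-- the weight-d part of the coset γ + pA A. -/
noncomputable def SA (d : ℕ) (A : Fin k₀ → F2 n) (γ : F2 n) : Finset (F2 n) :=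
  Finset.univ.filter (fun β : F2 n => hammingNorm β = d ∧ β + γ ∈ pA A)

def sgn (b : Bool) : ℝ := if b then 1 else -1

lemma sgn_inj : Function.Injective sgn := by
  intro a b h
  cases a <;> cases b <;> simp [sgn] at h ⊢ <;> norm_num at h

/-- Hypothesis: there are m₀ pairwise distinct nonzero cosets of pA A meeting the
weight-d sphere. -/
def Hyp (m₀ d : ℕ) (A : Fin k₀ → F2 n) : Prop :=
  ∃ Γ : Fin m₀ → F2 n, (∀ j, Γ j ∉ pA A) ∧
    (∀ j j', j ≠ j' → Γ j + Γ j' ∉ pA A) ∧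
    (∀ j, (SA d A (Γ j)).Nonempty)

lemma char2_pi {a b c : F2 n} : (a + b) + (a + c) = b + c := by
  funext i
  simp only [Pi.add_apply]
  have h0 : (a i) + (a i) = 0 := by generalize a i = t; revert t; decide
  calc a i + b i + (a i + c i) = b i + c i + (a i + a i) := by ring
    _ = b i + c i := by rw [h0, add_zero]

lemma SA_disjoint {A : Fin k₀ → F2 n} {γ γ' : F2 n} (h : γ + γ' ∉ pA A) :
    Disjoint (SA d A γ) (SA d A γ') := by
  rw [Finset.disjoint_left]
  intro β hβ hβ'
  rw [SA, Finset.mem_filter] at hβ hβ'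
  exact h (by
    have := (pA A).add_mem hβ.2.2 hβ'.2.2
    rwa [char2_pi] at this)

/-- The core counting argument: there is a choice of signs defeating all tests. -/
lemma counting (hT : Fintype.card ((Fin k₀ → F2 n) × F2 n) < 2 ^ m₀) :
    ∃ zb : F2 n → Bool, ∀ (A : Fin k₀ → F2 n) (α : F2 n), Hyp m₀ d A →
      ∃ γ, γ ∉ pA A ∧ (∑ β ∈ SA d A γ, sgn (zb β) * chi β α) ≠ 0 := by
  by_contra hcon
  push_neg at hcon
  -- chosen coset representatives for each test
  have hΓ : ∀ A : Fin k₀ → F2 n, ∃ Γ : Fin m₀ → F2 n, Hyp m₀ d A →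
      (∀ j, Γ j ∉ pA A) ∧ (∀ j j', j ≠ j' → Γ j + Γ j' ∉ pA A) ∧
      (∀ j, (SA d A (Γ j)).Nonempty) := by
    intro A
    by_cases h : Hyp m₀ d A
    · obtain ⟨Γ, h1, h2, h3⟩ := h
      exact ⟨Γ, fun _ => ⟨h1, h2, h3⟩⟩
    · exact ⟨fun _ => 0, fun h' => absurd h' h⟩
  choose Γ hΓspec using hΓ
  set Bad : ((Fin k₀ → F2 n) × F2 n) → Finset (F2 n → Bool) := fun t =>
    Finset.univ.filter (fun zb => Hyp m₀ d t.1 ∧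
      ∀ j, (∑ β ∈ SA d t.1 (Γ t.1 j), sgn (zb β) * chi β t.2) = 0) with hBad
  -- every sign pattern is bad for some test
  have hcover : ∀ zb : F2 n → Bool, ∃ t, zb ∈ Bad t := by
    intro zb
    obtain ⟨A, α, hH, hall⟩ := hcon zb
    refine ⟨(A, α), ?_⟩
    rw [hBad, Finset.mem_filter]
    refine ⟨Finset.mem_univ _, hH, fun j => ?_⟩
    obtain ⟨h1, _, _⟩ := hΓspec A hH
    exact hall (Γ A j) (h1 j)
  -- each test has few bad sign patterns
  have hfew : ∀ t, (Bad t).card * 2 ^ m₀ ≤ Fintype.card (F2 n → Bool) := by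
    intro t
    by_cases hH : Hyp m₀ d t.1
    case neg =>
      have : Bad t = ∅ := by
        rw [hBad, Finset.filter_eq_empty_iff]
        intro zb _
        rw [not_and]
        exact fun h => absurd h hH
      rw [this, Finset.card_empty, Nat.zero_mul]; exact Nat.zero_le _
    obtain ⟨h1, h2, h3⟩ := hΓspec t.1 hH
    set S : Fin m₀ → Finset (F2 n) := fun j => SA d t.1 (Γ t.1 j) with hS
    have hr : ∀ j, ∃ x, x ∈ S j := fun j => h3 j
    choose r hrmem using hr
    have hrinj : Function.Injective r := by
      intro j j' hjj
      by_contra hne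
      have hd := SA_disjoint (d := d) (h2 j j' hne)
      exact (Finset.disjoint_left.1 hd) (hrmem j) (hjj ▸ hrmem j')
    have hnotin : ∀ (j : Fin m₀) (β : F2 n), β ∈ S j → β ≠ r j → ¬ ∃ j', r j' = β := by
      rintro j β hβ hne ⟨j', rfl⟩
      rcases eq_or_ne j' j with rfl | hjj
      · exact hne rfl
      · exact (Finset.disjoint_left.1 (SA_disjoint (d := d) (h2 j' j hjj))) (hrmem j') hβ
    -- the injection
    set Φ : ((F2 n → Bool) × (Fin m₀ → Bool)) → (F2 n → Bool) := fun p =>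
      fun x => if h : ∃ j, r j = x then p.2 h.choose else p.1 x with hΦ
    have hΦr : ∀ p (j : Fin m₀), Φ p (r j) = p.2 j := by
      intro p j
      have h : ∃ j', r j' = r j := ⟨j, rfl⟩
      have : h.choose = j := hrinj h.choose_spec
      simp only [hΦ, dif_pos h, this]
    have hΦoff : ∀ p x, (¬ ∃ j, r j = x) → Φ p x = p.1 x := by
      intro p x hx
      simp only [hΦ, dif_neg hx]
    have key : Set.InjOn Φ (((Bad t) ×ˢ (Finset.univ : Finset (Fin m₀ → Bool)) : Finset _) : Set _) := by
      rintro ⟨z, u⟩ hzu ⟨z', u'⟩ hzu' heq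
      simp only [Finset.mem_coe, Finset.mem_product] at hzu hzu'
      have hz := hzu.1; have hz' := hzu'.1
      rw [hBad, Finset.mem_filter] at hz hz'
      have hoff : ∀ x, (¬ ∃ j, r j = x) → z x = z' x := by
        intro x hx
        have := congrFun heq x
        rwa [hΦoff ⟨z, u⟩ x hx, hΦoff ⟨z', u'⟩ x hx] at this
      have hon : ∀ j, z (r j) = z' (r j) := by
        intro j
        have E := hz.2.2 j
        have E' := hz'.2.2 j
        rw [← Finset.sum_erase_add _ _ (hrmem j)] at E E'
        have hrest : ∑ β ∈ (S j).erase (r j), sgn (z β) * chi β t.2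
            = ∑ β ∈ (S j).erase (r j), sgn (z' β) * chi β t.2 := by
          refine Finset.sum_congr rfl fun β hβ => ?_
          have hβS := Finset.mem_of_mem_erase hβ
          have hβne := Finset.ne_of_mem_erase hβ
          rw [hoff β (hnotin j β hβS hβne)]
        rw [hrest] at E
        have : sgn (z (r j)) * chi (r j) t.2 = sgn (z' (r j)) * chi (r j) t.2 := by
          linarith
        exact sgn_inj (mul_right_cancel₀ (chi_ne_zero _ _) this)
      have hzz : z = z' := by
        funext x
        by_cases hx : ∃ j, r j = x
        · obtain ⟨j, rfl⟩ := hx; exact hon j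
        · exact hoff x hx
      have huu : u = u' := by
        funext j
        have hval := congrFun heq (r j)
        rw [hΦr ⟨z, u⟩ j, hΦr ⟨z', u'⟩ j] at hval
        exact hval
      rw [Prod.ext_iff]
      exact ⟨hzz, huu⟩
    have hcard := Finset.card_le_card_of_injOn Φ (fun p _ => Finset.mem_univ (Φ p)) key
    rw [Finset.card_product, Finset.card_univ, Finset.card_univ] at hcard
    calc (Bad t).card * 2 ^ m₀
        = (Bad t).card * Fintype.card (Fin m₀ → Bool) := by
          rw [Fintype.card_fun]; simp
      _ ≤ Fintype.card (F2 n → Bool) := hcard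
  -- put it together
  have hcov2 : (Finset.univ : Finset (F2 n → Bool)) ⊆ Finset.univ.biUnion Bad := by
    intro zb _
    obtain ⟨t, ht⟩ := hcover zb
    exact Finset.mem_biUnion.2 ⟨t, Finset.mem_univ t, ht⟩
  have h1 : Fintype.card (F2 n → Bool) ≤ ∑ t : (Fin k₀ → F2 n) × F2 n, (Bad t).card := by
    calc Fintype.card (F2 n → Bool) = (Finset.univ : Finset (F2 n → Bool)).card :=
          (Finset.card_univ).symm
      _ ≤ (Finset.univ.biUnion Bad).card := Finset.card_le_card hcov2
      _ ≤ ∑ t : (Fin k₀ → F2 n) × F2 n, (Bad t).card := Finset.card_biUnion_le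
  have h2 : Fintype.card (F2 n → Bool) * 2 ^ m₀ ≤
      Fintype.card ((Fin k₀ → F2 n) × F2 n) * Fintype.card (F2 n → Bool) := by
    calc Fintype.card (F2 n → Bool) * 2 ^ m₀
        ≤ (∑ t : (Fin k₀ → F2 n) × F2 n, (Bad t).card) * 2 ^ m₀ :=
          Nat.mul_le_mul_right _ h1
      _ = ∑ t : (Fin k₀ → F2 n) × F2 n, (Bad t).card * 2 ^ m₀ := by rw [Finset.sum_mul]
      _ ≤ ∑ _t : (Fin k₀ → F2 n) × F2 n, Fintype.card (F2 n → Bool) :=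
          Finset.sum_le_sum (fun t _ => hfew t)
      _ = Fintype.card ((Fin k₀ → F2 n) × F2 n) * Fintype.card (F2 n → Bool) := by
          rw [Finset.sum_const, Finset.card_univ, smul_eq_mul]
  have hpos : 0 < Fintype.card (F2 n → Bool) := Fintype.card_pos
  have hlt : Fintype.card (F2 n → Bool) * 2 ^ m₀ < 2 ^ m₀ * Fintype.card (F2 n → Bool) :=
    lt_of_le_of_lt h2 ((Nat.mul_lt_mul_right hpos).2 hT)
  rw [Nat.mul_comm] at hlt
  exact lt_irrefl _ hlt
end counting

lemma zmod2_eq_one {a : ZMod 2} (h : a ≠ 0) : a = 1 := by revert h; revert a; decide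
lemma zmod2_add_self (a : ZMod 2) : a + a = 0 := by revert a; decide

/-- Gaussian elimination selection: r independent rows of V together with r pivot columns. -/
lemma sel {n : ℕ} (V : Submodule (ZMod 2) (F2 n)) :
    ∀ r : ℕ, r ≤ Module.finrank (ZMod 2) V →
    ∃ (I : Finset (Fin n)) (A : Fin r → F2 n),
      I.card = r ∧ (∀ j, A j ∈ V) ∧
      (∀ w : F2 n, w ≠ 0 → (∀ i, i ∉ I → w i = 0) → ∃ j, ip w (A j) ≠ 0) ∧
      (∀ x : F2 n, ∃ c : Fin r → ZMod 2, ∀ i ∈ I, (∑ j, c j • A j) i = x i) := by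
  intro r
  induction r with
  | zero =>
    intro _
    refine ⟨∅, fun _ => 0, rfl, fun j => j.elim0, ?_, ?_⟩
    · intro w hw hsupp
      exact absurd (funext fun i => hsupp i (Finset.notMem_empty i)) hw
    · intro x
      exact ⟨fun j => 0, fun i hi => absurd hi (Finset.notMem_empty i)⟩
  | succ r IH =>
    intro hr
    obtain ⟨I, A, hcard, hmem, hind, hsur⟩ := IH (Nat.le_of_succ_le hr)
    -- find a new vector
    have hspanle : Submodule.span (ZMod 2) (Set.range A) ≤ V := by
      rw [Submodule.span_le]
      rintro _ ⟨j, rfl⟩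
      exact hmem j
    have hrk : Module.finrank (ZMod 2) (Submodule.span (ZMod 2) (Set.range A)) ≤ r := by
      refine le_trans (finrank_span_le_card (Set.range A)) ?_
      rw [Set.toFinset_range]
      exact le_trans (Finset.card_image_le) (by simp)
    have hne : Submodule.span (ZMod 2) (Set.range A) ≠ V := by
      intro h
      rw [h] at hrk
      omega
    obtain ⟨v, hvV, hvns⟩ := SetLike.exists_of_lt (lt_of_le_of_ne hspanle hne)
    obtain ⟨c, hc⟩ := hsur v
    set s : F2 n := ∑ j, c j • A j with hs
    have hsspan : s ∈ Submodule.span (ZMod 2) (Set.range A) := by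
      refine Submodule.sum_mem _ fun j _ => Submodule.smul_mem _ _ ?_
      exact Submodule.subset_span ⟨j, rfl⟩
    set v' : F2 n := v + s with hv'
    have hv'V : v' ∈ V := V.add_mem hvV (hspanle hsspan)
    have hv'I : ∀ i ∈ I, v' i = 0 := by
      intro i hi
      have : s i = v i := hc i hi
      simp only [hv', Pi.add_apply, this]
      exact zmod2_add_self (v i)
    have hv'ne : v' ≠ 0 := by
      intro h
      apply hvns
      have : v = s := by
        funext i
        have := congrFun h i
        simp only [hv', Pi.add_apply, Pi.zero_apply] at this
        have h2 := congrArg (· + s i) this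
        simp only [zero_add] at h2
        rw [add_assoc, zmod2_add_self, add_zero] at h2
        exact h2
      rw [this]; exact hsspan
    obtain ⟨i₀, hi₀⟩ : ∃ i₀, v' i₀ ≠ 0 := by
      by_contra h
      push_neg at h
      exact hv'ne (funext fun i => h i)
    have hi₀I : i₀ ∉ I := fun h => hi₀ (hv'I i₀ h)
    have hv'i₀ : v' i₀ = 1 := zmod2_eq_one hi₀
    refine ⟨insert i₀ I, Fin.cons v' A, ?_, ?_, ?_, ?_⟩
    · rw [Finset.card_insert_of_notMem hi₀I, hcard]
    · intro j
      refine Fin.cases ?_ ?_ j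
      · rw [Fin.cons_zero]; exact hv'V
      · intro j'; rw [Fin.cons_succ]; exact hmem j'
    · intro w hw hsupp
      by_cases hw0 : w i₀ = 0
      · have hsupp' : ∀ i, i ∉ I → w i = 0 := by
          intro i hi
          rcases eq_or_ne i i₀ with rfl | hne'
          · exact hw0
          · exact hsupp i (by simp [Finset.mem_insert, hne', hi])
        obtain ⟨j, hj⟩ := hind w hw hsupp'
        exact ⟨j.succ, by rwa [Fin.cons_succ]⟩
      · refine ⟨0, ?_⟩
        rw [Fin.cons_zero]
        unfold ip
        rw [Finset.sum_eq_single i₀]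
        · exact mul_ne_zero hw0 hi₀
        · intro b _ hb
          by_cases hbI : b ∈ I
          · rw [hv'I b hbI, mul_zero]
          · rw [hsupp b (by simp [Finset.mem_insert, hb, hbI]), zero_mul]
        · intro h; exact absurd (Finset.mem_univ i₀) h
    · intro x
      obtain ⟨c', hc'⟩ := hsur x
      set y : F2 n := ∑ j, c' j • A j with hy
      refine ⟨Fin.cons (x i₀ + y i₀) c', ?_⟩
      intro i hi
      have hsum : (∑ j : Fin (r+1), (Fin.cons (x i₀ + y i₀) c' : Fin (r+1) → ZMod 2) j
          • (Fin.cons v' A : Fin (r+1) → F2 n) j) i = (x i₀ + y i₀) * v' i + y i := by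
        rw [Fin.sum_univ_succ]
        simp only [Fin.cons_zero, Fin.cons_succ, Pi.add_apply, Pi.smul_apply, smul_eq_mul]
        rfl
      rw [hsum]
      rcases Finset.mem_insert.1 hi with rfl | hiI
      · rw [hv'i₀, mul_one, add_assoc, zmod2_add_self, add_zero]
      · rw [hv'I i hiI, mul_zero, zero_add]
        exact hc' i hiI

lemma binom_helper : ∀ d : ℕ, ∀ a : ℕ, a^(d+1) + 2*(d+1)*a^d ≤ (a+2)^(d+1) := by
  intro d
  induction d with
  | zero => intro a; simpa using by omega
  | succ d IH =>
    intro a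
    have h1 : (a^(d+1) + 2*(d+1)*a^d) * (a+2) ≤ (a+2)^(d+1) * (a+2) :=
      Nat.mul_le_mul_right _ (IH a)
    have e : (a^(d+1) + 2*(d+1)*a^d) * (a+2)
        = a^(d+2) + 2*(d+2)*a^(d+1) + 4*(d+1)*a^d := by ring
    calc a^(d+2) + 2*(d+2)*a^(d+1)
        ≤ (a^(d+1) + 2*(d+1)*a^d) * (a+2) := by rw [e]; exact Nat.le_add_right _ _
      _ ≤ (a+2)^(d+1) * (a+2) := h1
      _ = (a+2)^(d+2) := by rw [← pow_succ]

lemma two_mul_pow_le : ∀ d : ℕ, 1 ≤ d → 2*(2*d-1)^d ≤ (2*d+1)^d := by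
  intro d hd
  obtain ⟨e, rfl⟩ : ∃ e, d = e + 1 := ⟨d - 1, by omega⟩
  set a := 2*(e+1)-1 with ha
  have h1 : a^(e+1) + 2*(e+1)*a^e ≤ (a+2)^(e+1) := binom_helper e a
  have h2 : 2*a^(e+1) ≤ a^(e+1) + 2*(e+1)*a^e := by
    have hps : a^(e+1) = a * a^e := by rw [pow_succ]; ring
    calc 2*a^(e+1) = a^(e+1) + a*a^e := by rw [hps]; ring
      _ ≤ a^(e+1) + 2*(e+1)*a^e :=
          Nat.add_le_add_left (Nat.mul_le_mul_right _ (by omega)) _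
  have h3 : a + 2 = 2*(e+1)+1 := by omega
  calc 2*a^(e+1) ≤ (a+2)^(e+1) := le_trans h2 h1
    _ = (2*(e+1)+1)^(e+1) := by rw [h3]
  
lemma fact_ineq : ∀ d : ℕ, 3 ≤ d → 4 * d.factorial * d ≤ (2*d-1)^d := by
  intro d hd
  induction d with
  | zero => omega
  | succ d IH =>
    rcases Nat.lt_or_ge d 3 with h3 | h3
    · interval_cases d
      · omega
      · omega
      · norm_num [Nat.factorial]
    · have ih := IH (by omega)
      -- 4*(d+1)!*(d+1)*d ≤ (2d+1)^(d+1)*d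
      have key : (4 * (d+1).factorial * (d+1)) * d ≤ ((2*(d+1)-1)^(d+1)) * d := by
        have e1 : (4 * (d+1).factorial * (d+1)) * d = (4 * d.factorial * d) * ((d+1)*(d+1)) := by
          rw [Nat.factorial_succ]; ring
        have e2 : (d+1)*(d+1) ≤ 2*d*(2*d+1) := by nlinarith
        have c1 : (4 * (d+1).factorial * (d+1)) * d ≤ (2*d-1)^d * (2*d*(2*d+1)) := by
          rw [e1]
          exact Nat.mul_le_mul ih e2
        have c2 : (2*d-1)^d * (2*d*(2*d+1)) = (2*(2*d-1)^d) * (d*(2*d+1)) := by ring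
        have c3 : (2*(2*d-1)^d) * (d*(2*d+1)) ≤ (2*d+1)^d * (d*(2*d+1)) :=
          Nat.mul_le_mul_right _ (two_mul_pow_le d (by omega))
        have c4 : (2*d+1)^d * (d*(2*d+1)) = ((2*d+1)^(d+1)) * d := by
          rw [pow_succ]; ring
        have c5 : 2*(d+1)-1 = 2*d+1 := by omega
        rw [c5]
        calc (4 * (d+1).factorial * (d+1)) * d ≤ (2*(2*d-1)^d) * (d*(2*d+1)) := by
              rw [← c2]; exact c1
          _ ≤ (2*d+1)^d * (d*(2*d+1)) := c3
          _ = ((2*d+1)^(d+1)) * d := c4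
      exact Nat.le_of_mul_le_mul_right key (by omega)

lemma arith_main {d n k : ℕ} (hd : 3 ≤ d) (hn : 1 ≤ n)
    (hk1 : (2*d)^(d-1) * n ≤ k^(d-1)) (hk2 : 2*d^2 ≤ k) :
    n * k + n + 1 ≤ k.choose d := by
  have hdk : d ≤ k := by nlinarith
  have h2k : 2 ≤ k := by nlinarith
  have step1 : n * k + n + 1 ≤ 2*(n*k) := by nlinarith
  have hposd : 0 < (2*d)^d := Nat.pow_pos (by omega)
  have step2 : d.factorial * (2*(n*k)) ≤ (k - d)^d := by
    refine Nat.le_of_mul_le_mul_left ?_ hposd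
    have e0 : (2*d)^(d-1) * (2*d) = (2*d)^d := by
      rw [← pow_succ, show (d-1)+1 = d by omega]
    have e1 : (2*d)^d * (d.factorial * (2*(n*k))) = (4*d.factorial*d) * (((2*d)^(d-1) * n) * k) := by
      rw [← e0]; ring
    have c1 : (4*d.factorial*d) * (((2*d)^(d-1) * n) * k) ≤ (2*d-1)^d * (k^(d-1) * k) :=
      Nat.mul_le_mul (fact_ineq d hd) (Nat.mul_le_mul_right _ hk1)
    have e2 : (2*d-1)^d * (k^(d-1) * k) = ((2*d-1)*k)^d := by
      rw [← pow_succ, show (d-1)+1 = d by omega, mul_pow]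
    have c2 : (2*d-1)*k ≤ (k-d)*(2*d) := by
      have l1 : (2*d-1)*k = 2*d*k - k := by
        rw [Nat.sub_mul]; ring_nf
      have l2 : (k-d)*(2*d) = 2*d*k - 2*d^2 := by
        rw [Nat.sub_mul]; ring_nf
      rw [l1, l2]
      exact Nat.sub_le_sub_left hk2 _
    have c3 : ((2*d-1)*k)^d ≤ ((k-d)*(2*d))^d := Nat.pow_le_pow_left c2 d
    have e3 : ((k-d)*(2*d))^d = (2*d)^d * (k-d)^d := by rw [mul_pow]; ring
    calc (2*d)^d * (d.factorial * (2*(n*k)))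
        = (4*d.factorial*d) * (((2*d)^(d-1) * n) * k) := e1
      _ ≤ (2*d-1)^d * (k^(d-1) * k) := c1
      _ = ((2*d-1)*k)^d := e2
      _ ≤ ((k-d)*(2*d))^d := c3
      _ = (2*d)^d * (k-d)^d := e3
  have step3 : (k - d)^d ≤ (k + 1 - d)^d := Nat.pow_le_pow_left (by omega) d
  have step4 : (k + 1 - d)^d ≤ d.factorial * k.choose d := by
    rw [← Nat.descFactorial_eq_factorial_mul_choose]
    exact Nat.pow_sub_le_descFactorial k d
  refine Nat.le_of_mul_le_mul_left ?_ (Nat.factorial_pos d)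
  calc d.factorial * (n*k+n+1) ≤ d.factorial * (2*(n*k)) :=
        Nat.mul_le_mul_left _ step1
    _ ≤ (k-d)^d := step2
    _ ≤ (k+1-d)^d := step3
    _ ≤ d.factorial * k.choose d := step4

lemma bridge {d n k : ℕ} (hd : 3 ≤ d) (hn : d^(d-1) ≤ n)
    (hk : (2 * d : ℝ) * (n:ℝ) ^ ((1:ℝ)/((d:ℝ)-1)) ≤ (k:ℝ)) :
    (2*d)^(d-1) * n ≤ k^(d-1) ∧ 2*d^2 ≤ k ∧ 1 ≤ n := by
  have hdc : ((d:ℝ) - 1) = ((d-1 : ℕ) : ℝ) := by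
    push_cast [Nat.cast_sub (by omega : 1 ≤ d)]; ring
  have hcne : ((d-1:ℕ):ℝ) ≠ 0 := Nat.cast_ne_zero.mpr (by omega)
  set X := (n:ℝ) ^ ((1:ℝ)/((d:ℝ)-1)) with hX
  have hXnn : 0 ≤ X := Real.rpow_nonneg (Nat.cast_nonneg n) _
  have hXpow : X ^ (d-1 : ℕ) = (n:ℝ) := by
    rw [hX, ← Real.rpow_natCast ((n:ℝ) ^ ((1:ℝ)/((d:ℝ)-1))) (d-1), ← Real.rpow_mul (Nat.cast_nonneg n)]
    rw [hdc, one_div, inv_mul_cancel₀ hcne, Real.rpow_one]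
  have hdX : (d:ℝ) ≤ X := by
    have h1 : ((d:ℝ)^(d-1:ℕ)) ^ ((1:ℝ)/((d:ℝ)-1)) ≤ X := by
      rw [hX]
      have hdpos : (0:ℝ) < (d:ℝ)-1 := by
        have h3 : (3:ℝ) ≤ (d:ℝ) := by exact_mod_cast hd
        linarith
      exact Real.rpow_le_rpow (by positivity) (by exact_mod_cast hn) (one_div_pos.2 hdpos).le
    have h2 : ((d:ℝ)^(d-1:ℕ)) ^ ((1:ℝ)/((d:ℝ)-1)) = (d:ℝ) := by
      rw [← Real.rpow_natCast (d:ℝ) (d-1), ← Real.rpow_mul (by positivity)]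
      rw [hdc, one_div, mul_inv_cancel₀ hcne, Real.rpow_one]
    rwa [h2] at h1
  have hn1 : 1 ≤ n := by
    have : 0 < d^(d-1) := Nat.pow_pos (by omega)
    omega
  refine ⟨?_, ?_, hn1⟩
  · have h1 : ((2*d : ℝ) * X) ^ (d-1:ℕ) ≤ (k:ℝ) ^ (d-1:ℕ) := by
      apply pow_le_pow_left₀ (by positivity) hk
    rw [mul_pow, hXpow] at h1
    exact_mod_cast h1
  · have h1 : (2*d:ℝ) * (d:ℝ) ≤ (2*d:ℝ) * X := by
      apply mul_le_mul_of_nonneg_left hdX (by positivity)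
    have h2 : (2*(d:ℝ)^2) ≤ (k:ℝ) := by nlinarith
    exact_mod_cast h2

section intsum
variable {n : ℕ}

lemma sum_pm_int (T : Finset (F2 n)) (t : F2 n → ℝ) (h : ∀ β ∈ T, t β = 1 ∨ t β = -1) :
    ∃ m : ℤ, ∑ β ∈ T, t β = (m : ℝ) := by
  induction T using Finset.induction_on with
  | empty => exact ⟨0, by simp⟩
  | insert a s hx ih =>
    obtain ⟨m, hm⟩ := ih (fun β hβ => h β (Finset.mem_insert_of_mem hβ))
    rcases h a (Finset.mem_insert_self a s) with ha | ha
    · exact ⟨m + 1, by rw [Finset.sum_insert hx, hm, ha]; push_cast; ring⟩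
    · exact ⟨m - 1, by rw [Finset.sum_insert hx, hm, ha]; push_cast; ring⟩

lemma one_le_abs_sum_pm {T : Finset (F2 n)} {t : F2 n → ℝ}
    (h : ∀ β ∈ T, t β = 1 ∨ t β = -1) (hne : ∑ β ∈ T, t β ≠ 0) :
    1 ≤ |∑ β ∈ T, t β| := by
  obtain ⟨m, hm⟩ := sum_pm_int T t h
  rw [hm] at hne ⊢
  have hm0 : m ≠ 0 := by exact_mod_cast hne
  have : 1 ≤ |m| := Int.one_le_abs (by omega)
  calc (1:ℝ) ≤ ((|m| : ℤ) : ℝ) := by exact_mod_cast this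
    _ = |(m:ℝ)| := by rw [Int.cast_abs]
end intsum

section hyp
variable {n k₀ m₀ d : ℕ}

lemma hyp_holds (hd1 : 1 ≤ d) (V : Submodule (ZMod 2) (F2 n))
    (hk : k₀ ≤ Module.finrank (ZMod 2) V) (hdk : d ≤ k₀) (hm : m₀ ≤ k₀.choose d) :
    ∃ A : Fin k₀ → F2 n, (∀ j, A j ∈ V) ∧ Hyp m₀ d A := by
  obtain ⟨I, A, hcard, hmem, hind, -⟩ := sel V k₀ hk
  refine ⟨A, hmem, ?_⟩
  -- pick m₀ distinct d-subsets of I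
  have hscard : (I.powersetCard d).card = k₀.choose d := by
    rw [Finset.card_powersetCard, hcard]
  obtain ⟨t, hts, htcard⟩ := Finset.exists_subset_card_eq (s := I.powersetCard d) (n := m₀)
    (by rw [hscard]; exact hm)
  have hE : Fin m₀ ≃ {x // x ∈ t} := (finCongr htcard.symm).trans t.equivFin.symm
  set J : Fin m₀ → Finset (Fin n) := fun j => (hE j : Finset (Fin n)) with hJ
  have hJt : ∀ j, J j ∈ t := fun j => (hE j).2
  have hJI : ∀ j, J j ⊆ I := fun j => (Finset.mem_powersetCard.1 (hts (hJt j))).1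
  have hJcard : ∀ j, (J j).card = d := fun j => (Finset.mem_powersetCard.1 (hts (hJt j))).2
  have hJinj : ∀ j j', j ≠ j' → J j ≠ J j' := fun j j' hne h =>
    hne (hE.injective (Subtype.ext h))
  set Γ : Fin m₀ → F2 n := fun j i => if i ∈ J j then 1 else 0 with hΓ
  have hsupp : ∀ j i, i ∉ I → Γ j i = 0 := by
    intro j i hi
    simp only [hΓ]
    exact if_neg (fun h => hi (hJI j h))
  have hval : ∀ j i, i ∈ J j → Γ j i = 1 := by
    intro j i hi
    simp only [hΓ]
    exact if_pos hi
  have hnz : ∀ j, Γ j ≠ 0 := by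
    intro j h
    obtain ⟨i, hi⟩ := Finset.card_pos.1 (by rw [hJcard j]; omega : 0 < (J j).card)
    have := hval j i hi
    rw [h] at this
    simp at this
  have hnorm : ∀ j, hammingNorm (Γ j) = d := by
    intro j
    rw [← hJcard j]
    unfold hammingNorm
    congr 1
    ext i
    simp only [Finset.mem_filter, Finset.mem_univ, true_and]
    constructor
    · intro h
      by_contra hi
      exact h (by simp only [hΓ]; exact if_neg hi)
    · intro h
      rw [hval j i h]
      exact one_ne_zero
  have hsum_supp : ∀ j j' i, i ∉ I → (Γ j + Γ j') i = 0 := by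
    intro j j' i hi
    simp only [Pi.add_apply, hsupp j i hi, hsupp j' i hi, add_zero]
  refine ⟨Γ, ?_, ?_, ?_⟩
  · intro j hmem'
    obtain ⟨jj, hjj⟩ := hind (Γ j) (hnz j) (fun i hi => hsupp j i hi)
    exact hjj (mem_pA.1 hmem' jj)
  · intro j j' hne hmem'
    have hJne := hJinj j j' hne
    have hnsub : ¬ J j ⊆ J j' := by
      intro hsub
      exact hJne (Finset.eq_of_subset_of_card_le hsub (by rw [hJcard, hJcard]))
    obtain ⟨i, hiJ, hiJ'⟩ := Finset.not_subset.1 hnsub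
    have hwne : Γ j + Γ j' ≠ 0 := by
      intro h
      have := congrFun h i
      simp only [Pi.add_apply, Pi.zero_apply, hval j i hiJ] at this
      rw [show Γ j' i = 0 from by simp only [hΓ]; exact if_neg hiJ', add_zero] at this
      exact one_ne_zero this
    obtain ⟨jj, hjj⟩ := hind (Γ j + Γ j') hwne (fun i hi => hsum_supp j j' i hi)
    exact hjj (mem_pA.1 hmem' jj)
  · intro j
    refine ⟨Γ j, ?_⟩
    rw [SA, Finset.mem_filter]
    refine ⟨Finset.mem_univ _, hnorm j, ?_⟩
    have : Γ j + Γ j = 0 := funext fun i => zmod2_add_self _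
    rw [this]
    exact (pA A).zero_mem
end hyp


section mainhelpers
variable {n : ℕ}

lemma char2_cancel (a b : F2 n) : a + (a + b) = b := by
  funext i
  simp only [Pi.add_apply]
  rw [← add_assoc, zmod2_add_self, zero_add]

lemma char2_sub (a b : F2 n) : a - b = a + b := by
  funext i
  simp only [Pi.sub_apply, Pi.add_apply]
  generalize a i = x; generalize b i = y
  revert x y; decide

lemma add_mem_iff_char2 (P : Submodule (ZMod 2) (F2 n)) {p : F2 n} (hp : p ∈ P) (X : F2 n) :
    X + p ∈ P ↔ X ∈ P := by
  constructor
  · intro h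
    have := P.add_mem h hp
    rwa [add_assoc, show p + p = (0 : F2 n) from funext fun i => zmod2_add_self _, add_zero]
      at this
  · intro h; exact P.add_mem h hp

end mainhelpers

/-- random homogeneous degree-d bounded functions are far from regular
on every affine subspace of dimension at least 2d·n^{1/(d-1)}. -/
theorem degree_d_bounded_lower_bound (d : ℕ) (hd : 3 ≤ d) :
    ∃ n₀ : ℕ, ∀ n : ℕ, n₀ ≤ n →
      ∃ z : F2 n → ℝ, (∀ γ, hammingNorm γ = d → z γ = 1 ∨ z γ = -1) ∧
        ∀ (V : Submodule (ZMod 2) (F2 n)) (α : F2 n),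
          (2 * d : ℝ) * (n : ℝ) ^ ((1 : ℝ) / ((d : ℝ) - 1)) ≤
            (Module.finrank (ZMod 2) V : ℝ) →
          ∀ W : Submodule (ZMod 2) (F2 n), IsCompl W (perp V) →
            ∃ γ ∈ W, γ ≠ 0 ∧
              ((n.choose d : ℝ))⁻¹ ≤
                |restrictCoeff
                  (fun x => ((n.choose d : ℝ))⁻¹ *
                    ∑ γ' ∈ Finset.univ.filter (fun γ' : F2 n => hammingNorm γ' = d),
                      z γ' * chi γ' x) V α γ| := by
  refine ⟨d^(d-1), fun n hn => ?_⟩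
  set k₀ := ⌈(2 * d : ℝ) * (n : ℝ) ^ ((1 : ℝ) / ((d : ℝ) - 1))⌉₊ with hk₀def
  set m₀ := n * k₀ + n + 1 with hm₀def
  have hF2card : Fintype.card (F2 n) = 2 ^ n := by
    rw [Fintype.card_fun]
    norm_num
  have hTcard : Fintype.card ((Fin k₀ → F2 n) × F2 n) < 2 ^ m₀ := by
    rw [Fintype.card_prod, Fintype.card_fun, hF2card, Fintype.card_fin, ← pow_mul, ← pow_add]
    exact Nat.pow_lt_pow_right (by norm_num) (by omega)
  obtain ⟨zb, hzb⟩ := counting (d := d) hTcard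
  refine ⟨fun γ => sgn (zb γ), fun γ _ => by by_cases h : zb γ <;> simp [sgn, h], ?_⟩
  intro V α hdim W hWc
  have hk₀le : k₀ ≤ Module.finrank (ZMod 2) V := Nat.ceil_le.2 hdim
  have hK : (2 * d : ℝ) * (n : ℝ) ^ ((1 : ℝ) / ((d : ℝ) - 1)) ≤ (k₀ : ℝ) := Nat.le_ceil _
  obtain ⟨hk1, hk2, hn1⟩ := bridge hd hn hK
  have hdk : d ≤ k₀ := by nlinarith
  have hchoose : m₀ ≤ k₀.choose d := arith_main hd hn1 hk1 hk2
  obtain ⟨A, hAV, hHyp⟩ := hyp_holds (by omega) V hk₀le hdk hchoose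
  obtain ⟨γt, hγt, hsne⟩ := hzb A α hHyp
  have hPle : perp V ≤ pA A := perp_le_pA hAV
  set t : F2 n → ℝ := fun β => sgn (zb β) * chi β α with ht
  have htpm : ∀ β, t β = 1 ∨ t β = -1 := by
    intro β
    rcases chi_eq_one_or β α with h | h <;> by_cases hb : zb β <;>
      simp [ht, sgn, h, hb]
  classical
  set mkq : F2 n → (F2 n ⧸ perp V) := Submodule.Quotient.mk with hmkq
  have hsplit := Finset.sum_fiberwise_of_maps_to
      (fun β (hβ : β ∈ SA d A γt) => Finset.mem_image_of_mem mkq hβ) t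
  have houter : ∑ c ∈ (SA d A γt).image mkq,
      ∑ β ∈ (SA d A γt).filter (fun β => mkq β = c), t β ≠ 0 := by
    rw [hsplit]; exact hsne
  obtain ⟨c, hcmem, hcne⟩ := Finset.exists_ne_zero_of_sum_ne_zero houter
  obtain ⟨β₀, hβ₀S, hβ₀c⟩ := Finset.mem_image.1 hcmem
  rw [SA, Finset.mem_filter] at hβ₀S
  have hβ₀γt : β₀ + γt ∈ pA A := hβ₀S.2.2
  have hβ₀np : β₀ ∉ perp V := by
    intro h
    apply hγt
    have hmem2 := (pA A).add_mem (hPle h) hβ₀γt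
    rwa [char2_cancel] at hmem2
  have hfeq : (SA d A γt).filter (fun β => mkq β = c)
      = Finset.univ.filter (fun β : F2 n => hammingNorm β = d ∧ β + β₀ ∈ perp V) := by
    ext β
    rw [SA]
    simp only [Finset.mem_filter, Finset.mem_univ, true_and]
    have hmkiff : (mkq β = c) ↔ β + β₀ ∈ perp V := by
      rw [← hβ₀c, hmkq]
      rw [Submodule.Quotient.eq (perp V), char2_sub]
    constructor
    · rintro ⟨⟨hn', -⟩, hc'⟩
      exact ⟨hn', hmkiff.1 hc'⟩
    · rintro ⟨hn', hp⟩
      refine ⟨⟨hn', ?_⟩, hmkiff.2 hp⟩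
      have hmem2 := (pA A).add_mem (hPle hp) hβ₀γt
      rwa [show (β + β₀) + (β₀ + γt) = β + γt from by
        rw [add_comm β β₀]; exact char2_pi] at hmem2
  obtain ⟨w, hw, p, hp, hwp⟩ := Submodule.mem_sup.1
    (by rw [hWc.sup_eq_top]; trivial : β₀ ∈ W ⊔ perp V)
  have hwne : w ≠ 0 := by
    rintro rfl
    rw [zero_add] at hwp
    exact hβ₀np (hwp ▸ hp)
  have hfeq2 : Finset.univ.filter (fun β : F2 n => hammingNorm β = d ∧ β + β₀ ∈ perp V)
      = Finset.univ.filter (fun β : F2 n => hammingNorm β = d ∧ β + w ∈ perp V) := by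
    apply Finset.filter_congr
    intro β _
    have : β + β₀ = (β + w) + p := by rw [← hwp, add_assoc]
    simp only [this, add_mem_iff_char2 (perp V) hp]
  rw [hfeq, hfeq2] at hcne
  refine ⟨w, hw, hwne, ?_⟩
  rw [restrictCoeff_formula ((n.choose d : ℝ))⁻¹ (fun γ => sgn (zb γ)) d V α w]
  have habs : 1 ≤ |∑ β ∈ Finset.univ.filter
      (fun β : F2 n => hammingNorm β = d ∧ β + w ∈ perp V), t β| :=
    one_le_abs_sum_pm (fun β _ => htpm β) hcne
  rw [abs_mul]
  have hinvnn : (0:ℝ) ≤ ((n.choose d : ℝ))⁻¹ := by positivity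
  calc ((n.choose d : ℝ))⁻¹ = ((n.choose d : ℝ))⁻¹ * 1 := by ring
    _ ≤ |((n.choose d : ℝ))⁻¹| * |∑ β ∈ Finset.univ.filter
          (fun β : F2 n => hammingNorm β = d ∧ β + w ∈ perp V), t β| := by
        rw [abs_of_nonneg hinvnn]
        exact mul_le_mul_of_nonneg_left habs hinvnn
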